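/- Let (M,d) be a compact metric space, A ⊆ M a nonempty closed subset, and h : A → ℝ a continuous function. Then there exists a point x ∈ M such that h(z) = d(x,z) for all z ∈ A if and only if for every ε > 0 and every finite collection of points z₁, …, z_J ∈ A there exists x ∈ M such that |h(z_j) − d(x,z_j)| < ε for all j = 1, …, J. -/
import Mathlib


/-- **Finite-sampling criterion for boundary distance functions.** Let `(M,d)` be a
compact metric space, `A ⊆ M` a nonempty closed subset and `h` continuous on `A`.
Then `h` is of the form `h(z) = d(x,z)` on `A` for some point `x ∈ M` if and only if
for every `ε > 0` and every finite collection of points `z₁, …, z_J ∈ A` there is an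
`x ∈ M` with `|h(z_j) − d(x, z_j)| < ε` for all `j`. -/
theorem stmt_2
    {M : Type*} [MetricSpace M] [CompactSpace M]
    (A : Set M) (hA_closed : IsClosed A) (hA_ne : A.Nonempty)
    (h : M → ℝ) (hh : ContinuousOn h A) :
    (∃ x : M, ∀ z ∈ A, h z = dist x z) ↔
      (∀ ε > (0 : ℝ), ∀ (J : ℕ) (z : Fin J → M), (∀ j, z j ∈ A) →
        ∃ x : M, ∀ j, |h (z j) - dist x (z j)| < ε) := by
  classical
  constructor
  · rintro ⟨x, hx⟩ ε hε J z hz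
    refine ⟨x, fun j => ?_⟩
    rw [hx _ (hz j)]
    simpa using hε
  · intro H
    -- finite version with Finsets
    have key : ∀ ε > (0:ℝ), ∀ S : Finset M, (↑S : Set M) ⊆ A →
        ∃ x : M, ∀ z ∈ S, |h z - dist x z| ≤ ε := by
      intro ε hε S hS
      obtain ⟨x, hx⟩ := H ε hε S.card (fun j => (S.equivFin.symm j : M))
        (fun j => hS (S.equivFin.symm j).2)
      refine ⟨x, fun z hz => ?_⟩
      have h1 := hx (S.equivFin ⟨z, hz⟩)
      simpa using h1.le
    -- family of closed sets
    set C : ℕ × Finset M → Set M :=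
      fun p => {x : M | ∀ z ∈ p.2, z ∈ A → |h z - dist x z| ≤ 1 / (p.1 + 1)} with hC
    have hclosed : ∀ p, IsClosed (C p) := by
      intro p
      have : C p = ⋂ z ∈ p.2, ⋂ (_ : z ∈ A), {x : M | |h z - dist x z| ≤ 1 / (p.1 + 1)} := by
        ext x; simp [hC]
      rw [this]
      refine isClosed_biInter fun z _ => isClosed_iInter fun _ => ?_
      exact isClosed_le ((continuous_const.sub (continuous_id.dist continuous_const)).abs)
        continuous_const
    have hne : ∀ p, (C p).Nonempty := by
      intro p
      have hpos : (0:ℝ) < 1 / (p.1 + 1) := by positivity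
      obtain ⟨x, hx⟩ := key _ hpos (p.2.filter (· ∈ A)) (by
        intro z hz
        simp only [Finset.coe_filter, Set.mem_setOf_eq] at hz
        exact hz.2)
      refine ⟨x, fun z hz hzA => ?_⟩
      exact hx z (Finset.mem_filter.mpr ⟨hz, hzA⟩)
    have hdir : Directed (· ⊇ ·) C := by
      rintro ⟨n, S⟩ ⟨m, T⟩
      refine ⟨(max n m, S ∪ T), ?_, ?_⟩
      · intro x hx z hz hzA
        refine (hx z (Finset.mem_union_left _ hz) hzA).trans ?_
        apply one_div_le_one_div_of_le (by positivity)
        have : (n:ℝ) ≤ max n m := by exact_mod_cast le_max_left n m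
        linarith
      · intro x hx z hz hzA
        refine (hx z (Finset.mem_union_right _ hz) hzA).trans ?_
        apply one_div_le_one_div_of_le (by positivity)
        have : (m:ℝ) ≤ max n m := by exact_mod_cast le_max_right n m
        linarith
    obtain ⟨x, hx⟩ := IsCompact.nonempty_iInter_of_directed_nonempty_isCompact_isClosed
      C hdir hne (fun p => (hclosed p).isCompact) hclosed
    refine ⟨x, fun z hzA => ?_⟩
    have habs : ∀ n : ℕ, |h z - dist x z| ≤ 1 / (n + 1) := by
      intro n
      have := Set.mem_iInter.mp hx (n, {z})
      exact this z (Finset.mem_singleton_self z) hzA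
    by_contra hne'
    have hpos : 0 < |h z - dist x z| := by
      rcases lt_or_eq_of_le (abs_nonneg (h z - dist x z)) with h1 | h1
      · exact h1
      · exact absurd (sub_eq_zero.mp (abs_eq_zero.mp h1.symm)) hne'
    obtain ⟨n, hn⟩ := exists_nat_one_div_lt hpos
    exact absurd (habs n) (not_le.mpr hn)
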